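/- Let V be the upper probability on a measurable space (Ω,𝓕) generated by a nonempty set 𝒫 of finitely additive probabilities, assume V is continuous, and let θ : Ω → Ω be a measurable transformation preserving V. Then θ is ergodic with respect to V if and only if every measurable ξ : Ω → ℝ satisfying ξ(θ·) = ξ(·) quasi-surely (i.e. V({ω : ξ(θω) ≠ ξ(ω)}) = 0) is constant quasi-surely, i.e. there exists c ∈ ℝ with V({ω : ξ(ω) ≠ c}) = 0. -/

import Mathlib

open MeasureTheory Filter Topology Set

def IsFinAddProb {Ω : Type*} [MeasurableSpace Ω] (P : Set Ω → ℝ) : Prop :=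
  P ∅ = 0 ∧ P Set.univ = 1 ∧
    (∀ A : Set Ω, MeasurableSet A → 0 ≤ P A ∧ P A ≤ 1) ∧
    (∀ A B : Set Ω, MeasurableSet A → MeasurableSet B → Disjoint A B →
      P (A ∪ B) = P A + P B)

def IsCapacity {Ω : Type*} [MeasurableSpace Ω] (μ : Set Ω → ℝ) : Prop :=
  μ ∅ = 0 ∧ μ Set.univ = 1 ∧
    ∀ A B : Set Ω, MeasurableSet A → MeasurableSet B → A ⊆ B → μ A ≤ μ B

def ContBelow {Ω : Type*} [MeasurableSpace Ω] (μ : Set Ω → ℝ) : Prop :=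
  ∀ A : ℕ → Set Ω, (∀ n, MeasurableSet (A n)) → Monotone A →
    Filter.Tendsto (fun n => μ (A n)) Filter.atTop (nhds (μ (⋃ n, A n)))

def ContAbove {Ω : Type*} [MeasurableSpace Ω] (μ : Set Ω → ℝ) : Prop :=
  ∀ A : ℕ → Set Ω, (∀ n, MeasurableSet (A n)) → Antitone A →
    Filter.Tendsto (fun n => μ (A n)) Filter.atTop (nhds (μ (⋂ n, A n)))

def ContAtEmpty {Ω : Type*} [MeasurableSpace Ω] (μ : Set Ω → ℝ) : Prop :=
  ∀ A : ℕ → Set Ω, (∀ n, MeasurableSet (A n)) → Antitone A → (⋂ n, A n) = ∅ →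
    Filter.Tendsto (fun n => μ (A n)) Filter.atTop (nhds 0)

def ContAtUniv {Ω : Type*} [MeasurableSpace Ω] (μ : Set Ω → ℝ) : Prop :=
  ∀ A : ℕ → Set Ω, (∀ n, MeasurableSet (A n)) → Monotone A → (⋃ n, A n) = Set.univ →
    Filter.Tendsto (fun n => μ (A n)) Filter.atTop (nhds 1)

def conjCap {Ω : Type*} (μ : Set Ω → ℝ) (A : Set Ω) : ℝ := 1 - μ Aᶜ

noncomputable def choquet {Ω : Type*} (μ : Set Ω → ℝ) (ξ : Ω → ℝ) : ℝ :=
  (∫ t in Set.Ioi (0:ℝ), μ {ω | ξ ω ≥ t}) +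
    (∫ t in Set.Iio (0:ℝ), (μ {ω | ξ ω ≥ t} - 1))

noncomputable def choquetE {Ω : Type*} (μ : Set Ω → ℝ) (ξ : Ω → EReal) : ℝ :=
  (∫ t in Set.Ioi (0:ℝ), μ {ω | (t : EReal) ≤ ξ ω}) +
    (∫ t in Set.Iio (0:ℝ), (μ {ω | (t : EReal) ≤ ξ ω} - 1))

def UpperProbOf {Ω : Type*} [MeasurableSpace Ω] (𝒮 : Set (Set Ω → ℝ)) (V : Set Ω → ℝ) : Prop :=
  ∀ A : Set Ω, MeasurableSet A → V A = sSup ((fun P => P A) '' 𝒮)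

def LowerProbOf {Ω : Type*} [MeasurableSpace Ω] (𝒮 : Set (Set Ω → ℝ)) (v : Set Ω → ℝ) : Prop :=
  ∀ A : Set Ω, MeasurableSet A → v A = sInf ((fun P => P A) '' 𝒮)

def ErgodicCap {Ω : Type*} [MeasurableSpace Ω] (μ : Set Ω → ℝ) (θ : Ω → Ω) : Prop :=
  ∀ B : Set Ω, MeasurableSet B → θ ⁻¹' B = B →
    (μ B = 0 ∨ μ B = 1) ∧ (μ B = 0 ∨ μ Bᶜ = 0)

def PreservesCap {Ω : Type*} [MeasurableSpace Ω] (μ : Set Ω → ℝ) (θ : Ω → Ω) : Prop :=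
  ∀ A : Set Ω, MeasurableSet A → μ (θ ⁻¹' A) = μ A

def IndepSigmaWrt {Ω : Type*} (μ : Set Ω → ℝ) (m₁ m₂ : MeasurableSpace Ω) : Prop :=
  ∀ A B : Set Ω, MeasurableSet[m₁] A → MeasurableSet[m₂] B → μ (A ∩ B) = μ A * μ B


namespace Stmt15Aux

variable {Ω : Type*} [MeasurableSpace Ω]

lemma fap_nonneg {P : Set Ω → ℝ} (h : IsFinAddProb P) {A : Set Ω} (hA : MeasurableSet A) :
    0 ≤ P A := (h.2.2.1 A hA).1

lemma fap_le_one {P : Set Ω → ℝ} (h : IsFinAddProb P) {A : Set Ω} (hA : MeasurableSet A) :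
    P A ≤ 1 := (h.2.2.1 A hA).2

lemma fap_mono {P : Set Ω → ℝ} (h : IsFinAddProb P) {A B : Set Ω}
    (hA : MeasurableSet A) (hB : MeasurableSet B) (hAB : A ⊆ B) : P A ≤ P B := by
  have he := h.2.2.2 A (B \ A) hA (hB.diff hA) disjoint_sdiff_right
  rw [Set.union_diff_cancel hAB] at he
  have h0 := fap_nonneg h (hB.diff hA)
  linarith

lemma fap_union_le {P : Set Ω → ℝ} (h : IsFinAddProb P) {A B : Set Ω}
    (hA : MeasurableSet A) (hB : MeasurableSet B) : P (A ∪ B) ≤ P A + P B := by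
  have he := h.2.2.2 A (B \ A) hA (hB.diff hA) disjoint_sdiff_right
  rw [Set.union_diff_self] at he
  have h1 := fap_mono h (hB.diff hA) hB Set.diff_subset
  linarith

lemma fap_compl {P : Set Ω → ℝ} (h : IsFinAddProb P) {A : Set Ω} (hA : MeasurableSet A) :
    P Aᶜ = 1 - P A := by
  have he := h.2.2.2 A Aᶜ hA hA.compl disjoint_compl_right
  rw [Set.union_compl_self, h.2.1] at he
  linarith

variable {𝒮 : Set (Set Ω → ℝ)} {V : Set Ω → ℝ}

lemma V_bdd (hP : ∀ P ∈ 𝒮, IsFinAddProb P) {A : Set Ω} (hA : MeasurableSet A) :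
    BddAbove ((fun P => P A) '' 𝒮) := by
  refine ⟨1, ?_⟩
  rintro x ⟨P, hPS, rfl⟩
  exact fap_le_one (hP P hPS) hA

lemma le_V (hP : ∀ P ∈ 𝒮, IsFinAddProb P) (hV : UpperProbOf 𝒮 V)
    {A : Set Ω} (hA : MeasurableSet A) {P : Set Ω → ℝ} (hPS : P ∈ 𝒮) :
    P A ≤ V A := by
  rw [hV A hA]
  exact le_csSup (V_bdd hP hA) ⟨P, hPS, rfl⟩

lemma V_le (h𝒮 : 𝒮.Nonempty) (hV : UpperProbOf 𝒮 V)
    {A : Set Ω} (hA : MeasurableSet A) {c : ℝ} (hc : ∀ P ∈ 𝒮, P A ≤ c) :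
    V A ≤ c := by
  rw [hV A hA]
  refine csSup_le (h𝒮.image _) ?_
  rintro x ⟨P, hPS, rfl⟩
  exact hc P hPS

lemma V_nonneg (h𝒮 : 𝒮.Nonempty) (hP : ∀ P ∈ 𝒮, IsFinAddProb P) (hV : UpperProbOf 𝒮 V)
    {A : Set Ω} (hA : MeasurableSet A) : 0 ≤ V A := by
  obtain ⟨P, hPS⟩ := h𝒮
  exact le_trans (fap_nonneg (hP P hPS) hA) (le_V hP hV hA hPS)

lemma V_empty (h𝒮 : 𝒮.Nonempty) (hP : ∀ P ∈ 𝒮, IsFinAddProb P) (hV : UpperProbOf 𝒮 V) :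
    V (∅ : Set Ω) = 0 := by
  refine le_antisymm (V_le h𝒮 hV MeasurableSet.empty ?_)
    (V_nonneg h𝒮 hP hV MeasurableSet.empty)
  intro P hPS; exact le_of_eq (hP P hPS).1

lemma V_univ (h𝒮 : 𝒮.Nonempty) (hP : ∀ P ∈ 𝒮, IsFinAddProb P) (hV : UpperProbOf 𝒮 V) :
    V (Set.univ : Set Ω) = 1 := by
  obtain ⟨P, hPS⟩ := h𝒮
  refine le_antisymm (V_le ⟨P, hPS⟩ hV MeasurableSet.univ ?_) ?_
  · intro Q hQS; exact le_of_eq (hP Q hQS).2.1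
  · calc (1:ℝ) = P Set.univ := ((hP P hPS).2.1).symm
      _ ≤ V Set.univ := le_V hP hV MeasurableSet.univ hPS

lemma V_mono (h𝒮 : 𝒮.Nonempty) (hP : ∀ P ∈ 𝒮, IsFinAddProb P) (hV : UpperProbOf 𝒮 V)
    {A B : Set Ω} (hA : MeasurableSet A) (hB : MeasurableSet B) (hAB : A ⊆ B) :
    V A ≤ V B := by
  refine V_le h𝒮 hV hA fun P hPS => ?_
  exact le_trans (fap_mono (hP P hPS) hA hB hAB) (le_V hP hV hB hPS)

lemma V_union_le (h𝒮 : 𝒮.Nonempty) (hP : ∀ P ∈ 𝒮, IsFinAddProb P) (hV : UpperProbOf 𝒮 V)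
    {A B : Set Ω} (hA : MeasurableSet A) (hB : MeasurableSet B) :
    V (A ∪ B) ≤ V A + V B := by
  refine V_le h𝒮 hV (hA.union hB) fun P hPS => ?_
  exact le_trans (fap_union_le (hP P hPS) hA hB)
    (add_le_add (le_V hP hV hA hPS) (le_V hP hV hB hPS))

lemma V_null_of_subset (h𝒮 : 𝒮.Nonempty) (hP : ∀ P ∈ 𝒮, IsFinAddProb P) (hV : UpperProbOf 𝒮 V)
    {A B : Set Ω} (hA : MeasurableSet A) (hB : MeasurableSet B) (hAB : A ⊆ B)
    (hB0 : V B = 0) : V A = 0 :=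
  le_antisymm (hB0 ▸ V_mono h𝒮 hP hV hA hB hAB) (V_nonneg h𝒮 hP hV hA)

lemma V_one_of_compl_null (h𝒮 : 𝒮.Nonempty) (hP : ∀ P ∈ 𝒮, IsFinAddProb P) (hV : UpperProbOf 𝒮 V)
    {A : Set Ω} (hA : MeasurableSet A) (h0 : V Aᶜ = 0) : V A = 1 := by
  obtain ⟨P, hPS⟩ := h𝒮
  have hPc : P Aᶜ = 0 := le_antisymm (h0 ▸ le_V hP hV hA.compl hPS)
    (fap_nonneg (hP P hPS) hA.compl)
  have hP1 : P A = 1 := by have := fap_compl (hP P hPS) hA; linarith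
  refine le_antisymm (V_le ⟨P, hPS⟩ hV hA fun Q hQS => fap_le_one (hP Q hQS) hA) ?_
  calc (1:ℝ) = P A := hP1.symm
    _ ≤ V A := le_V hP hV hA hPS

lemma V_null_iUnion (h𝒮 : 𝒮.Nonempty) (hP : ∀ P ∈ 𝒮, IsFinAddProb P) (hV : UpperProbOf 𝒮 V)
    (hVb : ContBelow V) {A : ℕ → Set Ω} (hA : ∀ n, MeasurableSet (A n))
    (h0 : ∀ n, V (A n) = 0) : V (⋃ n, A n) = 0 := by
  have hacc_meas : ∀ n, MeasurableSet (Set.accumulate A n) := fun n =>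
    MeasurableSet.biUnion (Set.to_countable _) fun k _ => hA k
  have hacc0 : ∀ n, V (Set.accumulate A n) = 0 := by
    intro n
    induction n with
    | zero => simpa [Set.accumulate_def, Nat.le_zero] using h0 0
    | succ n ih =>
      rw [Set.accumulate_def, Set.biUnion_le_succ, ← Set.accumulate_def]
      refine le_antisymm ?_ (V_nonneg h𝒮 hP hV ((hacc_meas n).union (hA (n+1))))
      calc V (Set.accumulate A n ∪ A (n+1))
          ≤ V (Set.accumulate A n) + V (A (n+1)) :=
            V_union_le h𝒮 hP hV (hacc_meas n) (hA (n+1))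
        _ = 0 := by rw [ih, h0]; ring
  have ht := hVb (Set.accumulate A) hacc_meas Set.monotone_accumulate
  rw [Set.iUnion_accumulate] at ht
  have ht' : Filter.Tendsto (fun n => V (Set.accumulate A n)) Filter.atTop (nhds 0) := by
    simpa [hacc0] using (tendsto_const_nhds : Filter.Tendsto (fun _ : ℕ => (0:ℝ)) Filter.atTop (nhds 0))
  exact tendsto_nhds_unique ht ht'

end Stmt15Aux

open Stmt15Aux in
theorem stmt15 {Ω : Type*} [MeasurableSpace Ω]
    (𝒮 : Set (Set Ω → ℝ)) (h𝒮 : 𝒮.Nonempty) (hP : ∀ P ∈ 𝒮, IsFinAddProb P)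
    (V : Set Ω → ℝ) (hV : UpperProbOf 𝒮 V) (hVb : ContBelow V) (hVa : ContAbove V)
    (θ : Ω → Ω) (hθ : Measurable θ) (hpres : PreservesCap V θ) :
    ErgodicCap V θ ↔
      ∀ ξ : Ω → ℝ, Measurable ξ → V {ω | ξ (θ ω) ≠ ξ ω} = 0 →
        ∃ c : ℝ, V {ω | ξ ω ≠ c} = 0 := by
  constructor
  · -- ergodic → quasi-sure invariant functions are quasi-surely constant
    intro herg ξ hξ hN0
    have hNmeas : MeasurableSet {ω | ξ (θ ω) ≠ ξ ω} :=
      (measurableSet_eq_fun (hξ.comp hθ) hξ).compl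
    have hiterm : ∀ n : ℕ, Measurable (θ^[n]) := fun n => hθ.iterate n
    set Nt : Set Ω := ⋃ n, (θ^[n]) ⁻¹' {ω | ξ (θ ω) ≠ ξ ω} with hNtdef
    have hNtmeas : MeasurableSet Nt :=
      MeasurableSet.iUnion fun n => (hiterm n) hNmeas
    have hNt0 : V Nt = 0 := by
      refine V_null_iUnion h𝒮 hP hV hVb (fun n => (hiterm n) hNmeas) ?_
      intro n
      induction n with
      | zero => simpa using hN0
      | succ n ih =>
        have he : (θ^[n+1]) ⁻¹' {ω | ξ (θ ω) ≠ ξ ω}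
            = θ ⁻¹' ((θ^[n]) ⁻¹' {ω | ξ (θ ω) ≠ ξ ω}) := by
          rw [Function.iterate_succ]; rfl
        rw [he, hpres _ ((hiterm n) hNmeas), ih]
    have hfix : ∀ ω, ω ∉ Nt → ∀ n : ℕ, ξ (θ^[n] ω) = ξ ω := by
      intro ω hω n
      induction n with
      | zero => simp
      | succ n ih =>
        have hmem : θ^[n] ω ∉ {ω | ξ (θ ω) ≠ ξ ω} := by
          intro hcon
          exact hω (Set.mem_iUnion.2 ⟨n, hcon⟩)
        simp only [Set.mem_setOf_eq, not_not] at hmem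
        rw [Function.iterate_succ_apply', hmem, ih]
    set A : ℝ → Set Ω := fun t => {ω | t ≤ ξ ω} with hAdef
    have hAmeas : ∀ t, MeasurableSet (A t) := fun t => hξ measurableSet_Ici
    -- key dichotomy for level sets
    have key : ∀ t : ℝ, V (A t) = 0 ∨ (V (A t) = 1 ∧ V (A t)ᶜ = 0) := by
      intro t
      set B : Set Ω := ⋂ n, ⋃ m, (θ^[n+m]) ⁻¹' (A t) with hBdef
      have hBmeas : MeasurableSet B :=
        MeasurableSet.iInter fun n => MeasurableSet.iUnion fun m =>
          (hiterm (n+m)) (hAmeas t)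
      have hmemB : ∀ x : Ω, x ∈ B ↔ ∀ n : ℕ, ∃ m : ℕ, θ^[n+m] x ∈ A t := by
        intro x; simp [hBdef]
      have hBinv : θ ⁻¹' B = B := by
        ext ω
        rw [Set.mem_preimage, hmemB, hmemB]
        constructor
        · intro h n
          obtain ⟨m, hm⟩ := h n
          refine ⟨m+1, ?_⟩
          rw [show n+(m+1) = (n+m)+1 by omega, Function.iterate_succ_apply]
          exact hm
        · intro h n
          obtain ⟨m, hm⟩ := h (n+1)
          refine ⟨m, ?_⟩
          rw [← Function.iterate_succ_apply, show (n+m).succ = n+1+m by omega]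
          exact hm
      have hagree : ∀ ω, ω ∉ Nt → (ω ∈ B ↔ ω ∈ A t) := by
        intro ω hω
        rw [hmemB]
        have hA' : ∀ k : ℕ, (θ^[k] ω ∈ A t ↔ ω ∈ A t) := by
          intro k
          simp only [hAdef, Set.mem_setOf_eq, hfix ω hω k]
        constructor
        · intro h
          obtain ⟨m, hm⟩ := h 0
          exact (hA' (0+m)).mp hm
        · intro h n
          exact ⟨0, (hA' (n+0)).mpr h⟩
      have hd1 : A t \ B ⊆ Nt := by
        intro ω hω
        by_contra hc; exact hω.2 ((hagree ω hc).mpr hω.1)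
      have hd2 : B \ A t ⊆ Nt := by
        intro ω hω
        by_contra hc; exact hω.2 ((hagree ω hc).mp hω.1)
      have htrans : ∀ X Y : Set Ω, MeasurableSet X → MeasurableSet Y →
          X \ Y ⊆ Nt → V X ≤ V Y := by
        intro X Y hX hY hXY
        have h1 : V (X \ Y) = 0 :=
          V_null_of_subset h𝒮 hP hV (hX.diff hY) hNtmeas hXY hNt0
        calc V X ≤ V ((X \ Y) ∪ Y) := by
              refine V_mono h𝒮 hP hV hX ((hX.diff hY).union hY) ?_
              intro x hx
              by_cases h : x ∈ Y
              exacts [Or.inr h, Or.inl ⟨hx, h⟩]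
          _ ≤ V (X \ Y) + V Y := V_union_le h𝒮 hP hV (hX.diff hY) hY
          _ = V Y := by rw [h1]; ring
      have hVAB : V (A t) = V B :=
        le_antisymm (htrans _ _ (hAmeas t) hBmeas hd1)
          (htrans _ _ hBmeas (hAmeas t) hd2)
      have hVABc : V (A t)ᶜ = V Bᶜ := by
        refine le_antisymm (htrans _ _ (hAmeas t).compl hBmeas.compl ?_)
          (htrans _ _ hBmeas.compl (hAmeas t).compl ?_)
        · intro ω hω; exact hd2 ⟨not_not.mp hω.2, hω.1⟩
        · intro ω hω; exact hd1 ⟨not_not.mp hω.2, hω.1⟩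
      obtain ⟨hor1, hor2⟩ := herg B hBmeas hBinv
      rcases hor2 with h0 | hc0
      · left; rw [hVAB, h0]
      · rcases hor1 with h0 | h1
        · left; rw [hVAB, h0]
        · exact Or.inr ⟨by rw [hVAB, h1], by rw [hVABc, hc0]⟩
    -- the set of levels of full upper probability
    set S : Set ℝ := {t | V (A t) = 1} with hSdef
    have hSne : S.Nonempty := by
      have hmono : Monotone (fun n : ℕ => A (-(n:ℝ))) := by
        intro n m hnm ω hω
        simp only [hAdef, Set.mem_setOf_eq] at hω ⊢
        have h1 : (n:ℝ) ≤ m := by exact_mod_cast hnm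
        linarith
      have huniv : (⋃ n : ℕ, A (-(n:ℝ))) = Set.univ := by
        ext ω
        simp only [Set.mem_iUnion, Set.mem_univ, iff_true, hAdef, Set.mem_setOf_eq]
        obtain ⟨n, hn⟩ := exists_nat_ge (-(ξ ω))
        exact ⟨n, by linarith⟩
      have ht := hVb (fun n : ℕ => A (-(n:ℝ))) (fun n => hAmeas _) hmono
      rw [huniv, V_univ h𝒮 hP hV] at ht
      obtain ⟨n, hn⟩ :=
        (ht.eventually (eventually_gt_nhds (by norm_num : (1:ℝ)/2 < 1))).exists
      rcases key (-(n:ℝ)) with h0 | h1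
      · rw [h0] at hn; norm_num at hn
      · exact ⟨-(n:ℝ), h1.1⟩
    have hSbdd : BddAbove S := by
      have hanti : Antitone (fun n : ℕ => A (n:ℝ)) := by
        intro n m hnm ω hω
        simp only [hAdef, Set.mem_setOf_eq] at hω ⊢
        have h1 : (n:ℝ) ≤ m := by exact_mod_cast hnm
        linarith
      have hempty : (⋂ n : ℕ, A (n:ℝ)) = ∅ := by
        ext ω
        simp only [Set.mem_iInter, Set.mem_empty_iff_false, iff_false, hAdef,
          Set.mem_setOf_eq, not_forall]
        obtain ⟨n, hn⟩ := exists_nat_gt (ξ ω)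
        exact ⟨n, not_le.mpr hn⟩
      have ht := hVa (fun n : ℕ => A (n:ℝ)) (fun n => hAmeas _) hanti
      rw [hempty, V_empty h𝒮 hP hV] at ht
      obtain ⟨n, hn⟩ :=
        (ht.eventually (eventually_lt_nhds (by norm_num : (0:ℝ) < 1/2))).exists
      refine ⟨(n:ℝ), fun t htS => ?_⟩
      by_contra hc
      push_neg at hc
      have hsub : A t ⊆ A (n:ℝ) := by
        intro ω hω
        simp only [hAdef, Set.mem_setOf_eq] at hω ⊢
        linarith
      have hmn := V_mono h𝒮 hP hV (hAmeas t) (hAmeas _) hsub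
      have htS' : V (A t) = 1 := htS
      rw [htS'] at hmn
      linarith
    refine ⟨sSup S, ?_⟩
    set c := sSup S with hcdef
    have hgt0 : ∀ t, c < t → V (A t) = 0 := by
      intro t htc
      rcases key t with h0 | h1
      · exact h0
      · exact absurd (le_csSup hSbdd h1.1) (not_le.mpr htc)
    have hlt0 : ∀ t, t < c → V {ω | ξ ω ≤ t} = 0 := by
      intro t htc
      obtain ⟨s, hsS, hts⟩ := exists_lt_of_lt_csSup hSne htc
      have hs1 : V (A s) = 1 := hsS
      rcases key s with h0 | h1
      · rw [hs1] at h0; norm_num at h0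
      · refine V_null_of_subset h𝒮 hP hV (hξ measurableSet_Iic) (hAmeas s).compl ?_ h1.2
        intro ω hω
        simp only [Set.mem_setOf_eq] at hω
        simp only [hAdef, Set.mem_compl_iff, Set.mem_setOf_eq, not_le]
        linarith
    have hVgt : V {ω | c < ξ ω} = 0 := by
      have hmono : Monotone (fun n : ℕ => A (c + 1/(n+1))) := by
        intro n m hnm ω hω
        simp only [hAdef, Set.mem_setOf_eq] at hω ⊢
        have h2 : (1:ℝ)/(m+1) ≤ 1/(n+1) := by
          apply one_div_le_one_div_of_le
          · positivity
          · have : (n:ℝ) ≤ m := by exact_mod_cast hnm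
            linarith
        linarith
      have hUnion : (⋃ n : ℕ, A (c + 1/(n+1))) = {ω | c < ξ ω} := by
        ext ω
        simp only [Set.mem_iUnion, hAdef, Set.mem_setOf_eq]
        constructor
        · rintro ⟨n, hn⟩
          have h2 : (0:ℝ) < 1/(n+1) := by positivity
          linarith
        · intro h
          obtain ⟨n, hn⟩ := exists_nat_one_div_lt (sub_pos.mpr h)
          exact ⟨n, by push_cast at hn ⊢; linarith⟩
      have ht := hVb (fun n : ℕ => A (c + 1/(n+1))) (fun n => hAmeas _) hmono
      rw [hUnion] at ht
      have h0 : ∀ n : ℕ, V (A (c + 1/(n+1))) = 0 := by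
        intro n
        apply hgt0
        have h2 : (0:ℝ) < 1/((n:ℝ)+1) := by positivity
        linarith
      have ht' : Filter.Tendsto (fun n : ℕ => V (A (c + 1/(n+1)))) Filter.atTop (nhds 0) :=
        Filter.Tendsto.congr (fun n => (h0 n).symm) tendsto_const_nhds
      exact tendsto_nhds_unique ht ht'
    have hVlt : V {ω | ξ ω < c} = 0 := by
      have hmono : Monotone (fun n : ℕ => {ω | ξ ω ≤ c - 1/(n+1)}) := by
        intro n m hnm ω hω
        simp only [Set.mem_setOf_eq] at hω ⊢
        have h2 : (1:ℝ)/(m+1) ≤ 1/(n+1) := by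
          apply one_div_le_one_div_of_le
          · positivity
          · have : (n:ℝ) ≤ m := by exact_mod_cast hnm
            linarith
        linarith
      have hUnion : (⋃ n : ℕ, {ω | ξ ω ≤ c - 1/(n+1)}) = {ω | ξ ω < c} := by
        ext ω
        simp only [Set.mem_iUnion, Set.mem_setOf_eq]
        constructor
        · rintro ⟨n, hn⟩
          have h2 : (0:ℝ) < 1/(n+1) := by positivity
          linarith
        · intro h
          obtain ⟨n, hn⟩ := exists_nat_one_div_lt (sub_pos.mpr h)
          exact ⟨n, by push_cast at hn ⊢; linarith⟩
      have ht := hVb (fun n : ℕ => {ω | ξ ω ≤ c - 1/(n+1)})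
        (fun n => hξ measurableSet_Iic) hmono
      rw [hUnion] at ht
      have h0 : ∀ n : ℕ, V {ω | ξ ω ≤ c - 1/(n+1)} = 0 := by
        intro n
        apply hlt0
        have h2 : (0:ℝ) < 1/((n:ℝ)+1) := by positivity
        linarith
      have ht' : Filter.Tendsto (fun n : ℕ => V {ω | ξ ω ≤ c - 1/(n+1)})
          Filter.atTop (nhds 0) :=
        Filter.Tendsto.congr (fun n => (h0 n).symm) tendsto_const_nhds
      exact tendsto_nhds_unique ht ht'
    have hsplit : {ω | ξ ω ≠ c} = {ω | ξ ω < c} ∪ {ω | c < ξ ω} := by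
      ext ω
      simp only [Set.mem_setOf_eq, Set.mem_union, ne_iff_lt_or_gt]
    have hmlt : MeasurableSet {ω | ξ ω < c} := hξ measurableSet_Iio
    have hmgt : MeasurableSet {ω | c < ξ ω} := hξ measurableSet_Ioi
    rw [hsplit]
    refine le_antisymm ?_ (V_nonneg h𝒮 hP hV (hmlt.union hmgt))
    calc V ({ω | ξ ω < c} ∪ {ω | c < ξ ω})
        ≤ V {ω | ξ ω < c} + V {ω | c < ξ ω} := V_union_le h𝒮 hP hV hmlt hmgt
      _ = 0 := by rw [hVlt, hVgt]; ring
  · -- converse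
    intro hcst B hB hinv
    classical
    set ξ : Ω → ℝ := fun ω => if ω ∈ B then 1 else 0 with hξdef
    have hξm : Measurable ξ := Measurable.ite hB measurable_const measurable_const
    have hinv' : {ω | ξ (θ ω) ≠ ξ ω} = ∅ := by
      ext ω
      simp only [Set.mem_setOf_eq, Set.mem_empty_iff_false, iff_false, not_not]
      have hmem : θ ω ∈ B ↔ ω ∈ B := by
        conv_rhs => rw [← hinv]
        rfl
      simp only [hξdef]
      by_cases h : ω ∈ B
      · rw [if_pos h, if_pos (hmem.mpr h)]
      · rw [if_neg h, if_neg (fun hc => h (hmem.mp hc))]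
    obtain ⟨c, hc⟩ := hcst ξ hξm (by rw [hinv']; exact V_empty h𝒮 hP hV)
    have hcm : MeasurableSet {ω | ξ ω ≠ c} :=
      (hξm (measurableSet_singleton c)).compl
    by_cases hc1 : c = 1
    · subst hc1
      have hsub : Bᶜ ⊆ {ω | ξ ω ≠ 1} := by
        intro ω hω
        simp only [Set.mem_setOf_eq, hξdef, if_neg hω]
        norm_num
      have hBc : V Bᶜ = 0 := V_null_of_subset h𝒮 hP hV hB.compl hcm hsub hc
      exact ⟨Or.inr (V_one_of_compl_null h𝒮 hP hV hB hBc), Or.inr hBc⟩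
    · have hsub : B ⊆ {ω | ξ ω ≠ c} := by
        intro ω hω
        simp only [Set.mem_setOf_eq, hξdef, if_pos hω]
        exact fun h => hc1 h.symm
      have hB0 : V B = 0 := V_null_of_subset h𝒮 hP hV hB hcm hsub hc
      exact ⟨Or.inl hB0, Or.inl hB0⟩
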